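/- Let M be a monoid and let nf be a normal-form function for the Noetherian confluent MRS (F_M, R_M). Then ν_M : M → F_M is injective and for all a, b ∈ M, nf (ν_M a * ν_M b) = ν_M (a*b). (Hence ν_M is a monoid isomorphism from M onto the monoid of irreducibles of (F_M, R_M), i.e. IG(M) = M.) -/
import Mathlib


namespace MRS

/-- One-step rewriting relation of an MRS `(M, R)`. -/
def Step {M : Type*} [Monoid M] (R : M → M → Prop) (a b : M) : Prop :=
  ∃ x y s t : M, a = x * s * y ∧ b = x * t * y ∧ R s t

/-- An element is irreducible for a relation if it only rewrites to itself. -/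
def IrredRel {α : Type*} (r : α → α → Prop) (a : α) : Prop :=
  ∀ b, r a b → a = b

/-- A relation is Noetherian if there is no infinite chain of non-trivial steps. -/
def NoetherianRel {α : Type*} (r : α → α → Prop) : Prop :=
  ¬ ∃ f : ℕ → α, ∀ n, r (f n) (f (n + 1)) ∧ f n ≠ f (n + 1)

/-- Confluence of a relation. -/
def ConfluentRel {α : Type*} (r : α → α → Prop) : Prop :=
  ∀ u a b : α, Relation.ReflTransGen r u a → Relation.ReflTransGen r u b →
    ∃ c, Relation.ReflTransGen r a c ∧ Relation.ReflTransGen r b c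

/-- `nf` is a normal-form function for the MRS `(M, R)`. -/
def IsNF {M : Type*} [Monoid M] (R : M → M → Prop) (nf : M → M) : Prop :=
  ∀ u, Relation.ReflTransGen (Step R) u (nf u) ∧ IrredRel (Step R) (nf u)

end MRS

open MRS

namespace MRS

/-- `ν_M : M → F_M`: sends `1` to the empty word and `m ≠ 1` to the single-letter word. -/
noncomputable def nu {M : Type*} [Monoid M] (m : M) : FreeMonoid {x : M // x ≠ 1} :=
  letI := Classical.dec (m = 1)
  if h : m = 1 then 1 else FreeMonoid.of ⟨m, h⟩

/-- The canonical rewriting relation `R_M` on `F_M`. -/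
def RM (M : Type*) [Monoid M] :
    FreeMonoid {x : M // x ≠ 1} → FreeMonoid {x : M // x ≠ 1} → Prop :=
  fun u v => ∃ a b : M, u = nu a * nu b ∧ v = nu (a * b)

end MRS

noncomputable def MRSpi {M : Type*} [Monoid M] : FreeMonoid {x : M // x ≠ 1} →* M :=
  FreeMonoid.lift Subtype.val

lemma MRS_nu_one {M : Type*} [Monoid M] : nu (1 : M) = 1 := by
  simp [nu]

lemma MRS_nu_of_ne {M : Type*} [Monoid M] {m : M} (h : m ≠ 1) :
    nu m = FreeMonoid.of ⟨m, h⟩ := by simp [nu, h]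

lemma MRS_pi_nu {M : Type*} [Monoid M] (m : M) : MRSpi (nu m) = m := by
  by_cases h : m = 1
  · subst h; simp [MRS_nu_one]
  · rw [MRS_nu_of_ne h]; simp [MRSpi]

lemma MRS_length_nu_le {M : Type*} [Monoid M] (m : M) : (nu m).length ≤ 1 := by
  by_cases h : m = 1
  · subst h; simp [MRS_nu_one]
  · rw [MRS_nu_of_ne h]; simp

lemma MRS_step_pi {M : Type*} [Monoid M] {u v : FreeMonoid {x : M // x ≠ 1}}
    (h : Step (RM M) u v) : MRSpi u = MRSpi v := by
  obtain ⟨x, y, s, t, rfl, rfl, a, b, rfl, rfl⟩ := h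
  simp [map_mul, MRS_pi_nu]

lemma MRS_rtg_pi {M : Type*} [Monoid M] {u v : FreeMonoid {x : M // x ≠ 1}}
    (h : Relation.ReflTransGen (Step (RM M)) u v) : MRSpi u = MRSpi v := by
  induction h with
  | refl => rfl
  | tail _ h ih => exact ih.trans (MRS_step_pi h)

lemma MRS_irred_eq_nu {M : Type*} [Monoid M] {u : FreeMonoid {x : M // x ≠ 1}}
    (h : IrredRel (Step (RM M)) u) : u = nu (MRSpi u) := by
  have hu : u = FreeMonoid.ofList u.toList := rfl
  match hl : u.toList with
  | [] =>
    have : u = 1 := by rw [hu, hl]; rfl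
    rw [this]; simp [MRS_nu_one]
  | [c] =>
    have hc : u = FreeMonoid.of c := by rw [hu, hl]; rfl
    rw [hc]
    rw [show MRSpi (FreeMonoid.of c) = c.val by simp [MRSpi], MRS_nu_of_ne c.prop]
  | c₁ :: c₂ :: rest =>
    exfalso
    have hc : u = (FreeMonoid.of c₁ * FreeMonoid.of c₂) * FreeMonoid.ofList rest := by
      rw [hu, hl]; rfl
    have hstep : Step (RM M) u (1 * nu (c₁.val * c₂.val) * FreeMonoid.ofList rest) := by
      refine ⟨1, FreeMonoid.ofList rest, FreeMonoid.of c₁ * FreeMonoid.of c₂,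
        nu (c₁.val * c₂.val), by rw [hc]; group, rfl, c₁.val, c₂.val, ?_, rfl⟩
      rw [MRS_nu_of_ne c₁.prop, MRS_nu_of_ne c₂.prop]
    have := h _ hstep
    have hlen := congrArg FreeMonoid.length this
    rw [hc] at hlen
    have h1 : (nu (c₁.val * c₂.val)).length ≤ 1 := MRS_length_nu_le _
    simp only [FreeMonoid.length_mul, FreeMonoid.length_of, FreeMonoid.length_one] at hlen
    omega

/-- `ν_M` is injective and `nf (ν_M a * ν_M b) = ν_M (a*b)`, so `ν_M` is a
monoid isomorphism onto the monoid of irreducibles of `(F_M, R_M)`. -/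
theorem stmt_10 {M : Type*} [Monoid M]
    (nf : FreeMonoid {x : M // x ≠ 1} → FreeMonoid {x : M // x ≠ 1})
    (hnf : IsNF (RM M) nf) :
    Function.Injective (nu (M := M)) ∧
      ∀ a b : M, nf (nu a * nu b) = nu (a * b) := by
  constructor
  · intro a b h
    rw [← MRS_pi_nu a, h, MRS_pi_nu]
  · intro a b
    obtain ⟨hsteps, hirr⟩ := hnf (nu a * nu b)
    have h1 := MRS_rtg_pi hsteps
    rw [MRS_irred_eq_nu hirr, ← h1]
    simp [map_mul, MRS_pi_nu]
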